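/- Let 0 < ε ≤ 1/2 and let x be a vertex with μ(x) ≥ 1/n, where n is the number of vertices. Let t be an integer with t ≥ n²·W/ε, where W is the maximum edge weight, and suppose δ̂_t(x) is a real number with δ_t(x) ≤ δ̂_t(x) ≤ (1+ε)·δ_t(x). Then the value μ̂(x) := δ̂_t(x)/((1−ε)·t) satisfies μ(x) ≤ μ̂(x) ≤ (1 + 7ε)·μ(x). -/

import Mathlib

open scoped ENNReal

/-- A walk of length `t` in the graph: `t+1` vertices with consecutive ones joined by edges
(edges and vertices may repeat). -/
def IsWalk {n : ℕ} (E : Fin n → Fin n → Prop) {t : ℕ} (p : Fin (t + 1) → Fin n) : Prop :=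
  ∀ i : Fin t, E (p i.castSucc) (p i.succ)

/-- The weight of a walk: the sum of its edge weights. -/
def walkWeight {n : ℕ} (w : Fin n → Fin n → ℕ) {t : ℕ} (p : Fin (t + 1) → Fin n) : ℕ :=
  ∑ i : Fin t, w (p i.castSucc) (p i.succ)
/-- `y` is reachable from `x` (by a path of length ≥ 0). -/
def Reachable {n : ℕ} (E : Fin n → Fin n → Prop) (x y : Fin n) : Prop :=
  ∃ (t : ℕ) (p : Fin (t + 1) → Fin n), IsWalk E p ∧ p 0 = x ∧ p (Fin.last t) = y

/-- The set of mean weights of cycles reachable from `x`. -/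
def cycleMeans {n : ℕ} (E : Fin n → Fin n → Prop) (w : Fin n → Fin n → ℕ)
    (x : Fin n) : Set ℝ :=
  {q | ∃ (t : ℕ) (p : Fin (t + 1) → Fin n), 0 < t ∧ IsWalk E p ∧
    p (Fin.last t) = p 0 ∧ Reachable E x (p 0) ∧ q = (walkWeight w p : ℝ) / t}

/-- `mcm E w x` is `μ(x)`, the minimum mean weight over all cycles reachable from `x`. -/
noncomputable def mcm {n : ℕ} (E : Fin n → Fin n → Prop) (w : Fin n → Fin n → ℕ)
    (x : Fin n) : ℝ :=
  sInf (cycleMeans E w x)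
/-- `deltaNat E w t x` is `δ_t(x)`, the minimum weight of all paths of length exactly `t`
starting at `x`. -/
noncomputable def deltaNat {n : ℕ} (E : Fin n → Fin n → Prop) (w : Fin n → Fin n → ℕ)
    (t : ℕ) (x : Fin n) : ℕ :=
  sInf {c : ℕ | ∃ p : Fin (t + 1) → Fin n, IsWalk E p ∧ p 0 = x ∧ c = walkWeight w p}

namespace MCMAux


variable {n : ℕ} (E : Fin n → Fin n → Prop) (w : Fin n → Fin n → ℕ)

/-- ℕ-indexed walk of length `t`. -/
def NW (f : ℕ → Fin n) (t : ℕ) : Prop := ∀ i < t, E (f i) (f (i + 1))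

/-- Weight of an ℕ-indexed walk of length `t`. -/
def wt (f : ℕ → Fin n) (t : ℕ) : ℕ := ∑ i ∈ Finset.range t, w (f i) (f (i + 1))

/-- ℕ-indexed reachability. -/
def NR (x y : Fin n) : Prop := ∃ (s : ℕ) (f : ℕ → Fin n), NW E f s ∧ f 0 = x ∧ f s = y

variable {E w}

lemma NR.refl (x : Fin n) : NR E x x := ⟨0, fun _ => x, fun i hi => absurd hi (by omega), rfl, rfl⟩

lemma NR.trans {x y z : Fin n} (h1 : NR E x y) (h2 : NR E y z) : NR E x z := by
  obtain ⟨s1, a, ha, ha0, ha1⟩ := h1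
  obtain ⟨s2, b, hb, hb0, hb1⟩ := h2
  refine ⟨s1 + s2, fun m => if m < s1 then a m else b (m - s1), ?_, ?_, ?_⟩
  · intro m hm
    by_cases h1 : m + 1 < s1
    · simp only [if_pos (by omega : m < s1), if_pos h1]; exact ha m (by omega)
    · by_cases h2 : m < s1
      · have hm1 : m + 1 = s1 := by omega
        simp only [if_pos h2, if_neg (by omega : ¬ m + 1 < s1)]
        have : b (m + 1 - s1) = a (m + 1) := by
          rw [hm1]; simp [hb0, ← ha1]
        rw [this]; exact ha m (by omega)
      · simp only [if_neg h2, if_neg (by omega : ¬ m + 1 < s1)]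
        have : m + 1 - s1 = (m - s1) + 1 := by omega
        rw [this]; exact hb (m - s1) (by omega)
  · by_cases h : 0 < s1
    · simpa [h] using ha0
    · have hs1 : s1 = 0 := by omega
      simp [hs1, hb0, ← ha1, hs1, ← ha0]
  · by_cases h : s1 + s2 < s1
    · omega
    · simp only [if_neg h]; rw [Nat.add_sub_cancel_left]; exact hb1

/-- The splice lemma: cutting out a repeated segment. -/
lemma splice {f : ℕ → Fin n} {t i j : ℕ} (hij : i ≤ j) (hjt : j ≤ t)
    (heq : f i = f j) (hw : NW E f t) :
    NW E (fun k => if k < i then f k else f (k + (j - i))) (t - (j - i)) ∧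
    (fun k => if k < i then f k else f (k + (j - i))) 0 = f 0 ∧
    (fun k => if k < i then f k else f (k + (j - i))) (t - (j - i)) = f t ∧
    wt w (fun k => if k < i then f k else f (k + (j - i))) (t - (j - i))
      + ∑ k ∈ Finset.Ico i j, w (f k) (f (k + 1)) = wt w f t := by
  set d := j - i with hd
  set g : ℕ → Fin n := fun k => if k < i then f k else f (k + d) with hg
  have hgval : ∀ k, k ≤ i → g k = f k := by
    intro k hk
    by_cases h : k < i
    · simp [hg, h]
    · have : k = i := by omega
      simp [hg, this, (by omega : i + d = j), ← heq]
  have hterm : ∀ k < t - d, w (g k) (g (k+1)) = if k < i then w (f k) (f (k+1)) else w (f (k+d)) (f (k+d+1)) := by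
    intro k hk
    by_cases h : k < i
    · rw [if_pos h, hgval k (by omega), hgval (k+1) (by omega)]
    · rw [if_neg h]
      simp only [hg, if_neg h, if_neg (by omega : ¬ k + 1 < i)]
      have : k + 1 + d = k + d + 1 := by omega
      rw [this]
  refine ⟨?_, hgval 0 (by omega), ?_, ?_⟩
  · intro k hk
    by_cases h : k < i
    · rw [hgval k (by omega), hgval (k+1) (by omega)]
      exact hw k (by omega)
    · simp only [hg, if_neg h, if_neg (by omega : ¬ k + 1 < i)]
      have : k + 1 + d = (k + d) + 1 := by omega
      rw [this]
      exact hw (k + d) (by omega)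
  · have h1 : ¬ t - d < i := by omega
    simp only [hg, if_neg h1]
    congr 1
    omega
  · have hi_le : i ≤ t - d := by omega
    have e1 : wt w g (t - d) = ∑ k ∈ Finset.range i, w (f k) (f (k+1))
        + ∑ k ∈ Finset.Ico i (t - d), w (f (k+d)) (f (k+d+1)) := by
      rw [wt, Finset.range_eq_Ico, ← Finset.sum_Ico_consecutive _ (by omega : 0 ≤ i) hi_le,
        ← Finset.range_eq_Ico]
      congr 1
      · exact Finset.sum_congr rfl (fun k hk => by
          have hk' := Finset.mem_range.mp hk
          rw [hterm k (by omega), if_pos hk'])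
      · exact Finset.sum_congr rfl (fun k hk => by
          have hk' := Finset.mem_Ico.mp hk
          rw [hterm k (by omega), if_neg (by omega)])
    have e2 : ∑ k ∈ Finset.Ico i (t - d), w (f (k+d)) (f (k+d+1))
        = ∑ k ∈ Finset.Ico j t, w (f k) (f (k+1)) := by
      rw [Finset.sum_Ico_eq_sum_range, Finset.sum_Ico_eq_sum_range]
      have : t - d - i = t - j := by omega
      rw [this]
      exact Finset.sum_congr rfl (fun k _ => by
        have : i + k + d = j + k := by omega
        rw [this])
    rw [e1, e2, wt, Finset.range_eq_Ico, Finset.range_eq_Ico,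
      ← Finset.sum_Ico_consecutive (fun k => w (f k) (f (k+1))) (by omega : 0 ≤ i) (by omega : i ≤ t),
      ← Finset.sum_Ico_consecutive (fun k => w (f k) (f (k+1))) (hij) (hjt),
      ← Finset.range_eq_Ico]
    ring

lemma pigeonhole (f : ℕ → Fin n) (hn : 0 < n) : ∃ i j, i < j ∧ j ≤ n ∧ f i = f j := by
  have : ¬ Function.Injective (fun k : Fin (n+1) => f k) := by
    intro h
    have := Fintype.card_le_of_injective _ h
    simp at this
  rw [Function.not_injective_iff] at this
  obtain ⟨a, b, hab, hne⟩ := this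
  rcases lt_or_gt_of_ne (fun h : (a:ℕ) = b => hne (Fin.ext h)) with h | h
  · exact ⟨a, b, h, by omega, hab⟩
  · exact ⟨b, a, h, by omega, hab.symm⟩

lemma exists_walk (hout : ∀ v : Fin n, ∃ u : Fin n, E v u) (x : Fin n) :
    ∃ f : ℕ → Fin n, f 0 = x ∧ ∀ t, NW E f t := by
  refine ⟨fun m => Nat.rec x (fun _ v => Classical.choose (hout v)) m, rfl, ?_⟩
  intro t i _
  exact Classical.choose_spec (hout _)

lemma wt_le (hW : ∀ a b : Fin n, E a b → w a b ≤ W) {f : ℕ → Fin n} {t : ℕ}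
    (hf : NW E f t) : wt w f t ≤ t * W := by
  calc wt w f t ≤ ∑ _i ∈ Finset.range t, W :=
        Finset.sum_le_sum (fun i hi => hW _ _ (hf i (Finset.mem_range.mp hi)))
    _ = t * W := by simp [Finset.sum_const, mul_comm]



def CycN (E : Fin n → Fin n → Prop) (w : Fin n → Fin n → ℕ) (x : Fin n) (c v : ℕ) : Prop :=
  ∃ f : ℕ → Fin n, NW E f c ∧ f c = f 0 ∧ NR E x (f 0) ∧ v = wt w f c

/-- ℕ-walk to Fin-walk. -/
lemma ofN {f : ℕ → Fin n} {t : ℕ} (hf : NW E f t) :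
    IsWalk E (fun i : Fin (t+1) => f i) ∧ walkWeight w (fun i : Fin (t+1) => f i) = wt w f t := by
  constructor
  · intro i
    simpa using hf i i.isLt
  · rw [walkWeight]
    have : ∀ i : Fin t, w (f (i.castSucc : Fin (t+1)).val) (f (i.succ : Fin (t+1)).val)
        = w (f i.val) (f (i.val + 1)) := by intro i; simp
    rw [Finset.sum_congr rfl (fun i _ => this i)]
    exact Fin.sum_univ_eq_sum_range (fun m => w (f m) (f (m+1))) t

/-- Fin-walk to ℕ-walk. -/
lemma toN {t : ℕ} {p : Fin (t+1) → Fin n} (hp : IsWalk E p) :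
    NW E (fun m => p ⟨min m t, by omega⟩) t ∧
    wt w (fun m => p ⟨min m t, by omega⟩) t = walkWeight w p ∧
    (fun m => p ⟨min m t, by omega⟩) 0 = p 0 ∧
    (fun m => p ⟨min m t, by omega⟩) t = p (Fin.last t) := by
  set f : ℕ → Fin n := fun m => p ⟨min m t, by omega⟩ with hfdef
  have hfv : ∀ i : Fin t, f i.val = p i.castSucc ∧ f (i.val + 1) = p i.succ := by
    intro i
    constructor
    · show p _ = p _
      congr 1
      exact Fin.ext (by simp [Nat.min_eq_left (le_of_lt (by omega : (i:ℕ) < t + 1))])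
    · show p _ = p _
      congr 1
      exact Fin.ext (by simp)
  refine ⟨?_, ?_, ?_, ?_⟩
  · intro i hi
    rw [(hfv ⟨i, hi⟩).1, (hfv ⟨i, hi⟩).2]
    exact hp ⟨i, hi⟩
  · rw [wt, walkWeight, ← Fin.sum_univ_eq_sum_range (fun m => w (f m) (f (m+1))) t]
    exact Finset.sum_congr rfl (fun i _ => by rw [(hfv i).1, (hfv i).2])
  · show p _ = p 0
    congr 1
  · show p _ = p (Fin.last t)
    congr 1
    exact Fin.ext (by simp [Fin.last])

lemma reachable_iff_NR {x y : Fin n} : Reachable E x y ↔ NR E x y := by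
  constructor
  · rintro ⟨t, p, hp, h0, h1⟩
    obtain ⟨hw, -, e0, e1⟩ := toN (w := fun _ _ => 0) hp
    exact ⟨t, _, hw, e0.trans h0, e1.trans h1⟩
  · rintro ⟨s, f, hf, h0, h1⟩
    obtain ⟨hw, -⟩ := ofN (w := fun _ _ => 0) hf
    refine ⟨s, fun i : Fin (s+1) => f i, hw, by simpa using h0, ?_⟩
    simpa [Fin.last] using h1

lemma mem_cycleMeans_iff {x : Fin n} {q : ℝ} :
    q ∈ cycleMeans E w x ↔ ∃ c v, 0 < c ∧ CycN E w x c v ∧ q = (v : ℝ) / c := by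
  constructor
  · rintro ⟨c, p, hc, hp, hcyc, hreach, hq⟩
    obtain ⟨hw, hwt, e0, e1⟩ := toN (w := w) hp
    exact ⟨c, _, hc, ⟨_, hw, e1.trans (hcyc.trans e0.symm),
      by simpa using reachable_iff_NR.mp hreach, rfl⟩, by rw [hq, hwt]⟩
  · rintro ⟨c, v, hc, ⟨f, hf, hcyc, hreach, hv⟩, hq⟩
    obtain ⟨hw, hwt⟩ := ofN (w := w) hf
    refine ⟨c, fun i : Fin (c+1) => f i, hc, hw, ?_, ?_, ?_⟩
    · simpa [Fin.last] using hcyc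
    · simpa using reachable_iff_NR.mpr hreach
    · rw [hq, hwt, hv]

lemma deltaNat_set_eq {x : Fin n} {t : ℕ} :
    {c : ℕ | ∃ p : Fin (t + 1) → Fin n, IsWalk E p ∧ p 0 = x ∧ c = walkWeight w p}
    = {c : ℕ | ∃ f : ℕ → Fin n, NW E f t ∧ f 0 = x ∧ c = wt w f t} := by
  ext v
  constructor
  · rintro ⟨p, hp, h0, hv⟩
    obtain ⟨hw, hwt, e0, -⟩ := toN (w := w) hp
    exact ⟨_, hw, e0.trans h0, by rw [hv, hwt]⟩
  · rintro ⟨f, hf, h0, hv⟩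
    obtain ⟨hw, hwt⟩ := ofN (w := w) hf
    exact ⟨_, hw, by simpa using h0, by rw [hv, hwt]⟩

lemma seg_cycle {x : Fin n} {f : ℕ → Fin n} {c i j : ℕ} (hij : i < j) (hjc : j ≤ c)
    (heq : f i = f j) (hf : NW E f c) (hreach : NR E x (f i)) :
    CycN E w x (j - i) (∑ k ∈ Finset.Ico i j, w (f k) (f (k + 1))) := by
  refine ⟨fun k => f (i + k), ?_, ?_, ?_, ?_⟩
  · intro k hk
    have e : i + k + 1 = i + (k + 1) := by omega
    have := hf (i + k) (by omega)
    rwa [e] at this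
  · show f (i + (j - i)) = f (i + 0)
    rw [(by omega : i + (j - i) = j), (by omega : i + 0 = i)]
    exact heq.symm
  · simpa using hreach
  · rw [wt, Finset.sum_Ico_eq_sum_range]
    exact Finset.sum_congr rfl (fun k _ => by rw [(by omega : i + k + 1 = i + (k + 1))])

lemma prefix_reach {x : Fin n} {f : ℕ → Fin n} {c i : ℕ} (hic : i ≤ c)
    (hf : NW E f c) (h0 : NR E x (f 0)) : NR E x (f i) :=
  h0.trans ⟨i, f, fun m hm => hf m (by omega), rfl, rfl⟩

lemma cyc_exists (hout : ∀ v : Fin n, ∃ u : Fin n, E v u) (hn : 0 < n) (x : Fin n) :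
    ∃ c v, 0 < c ∧ c ≤ n ∧ CycN E w x c v := by
  obtain ⟨f, hf0, hf⟩ := exists_walk (E := E) hout x
  obtain ⟨i, j, hij, hjn, heq⟩ := pigeonhole f hn
  refine ⟨j - i, _, by omega, by omega,
    seg_cycle hij hjn heq (hf n) (prefix_reach (by omega) (hf n) ?_)⟩
  rw [hf0]
  exact NR.refl x

lemma min_cycle {W : ℕ} (hW : ∀ a b : Fin n, E a b → w a b ≤ W)
    (hout : ∀ v : Fin n, ∃ u : Fin n, E v u) (hn : 0 < n) (x : Fin n) :
    ∃ c₀ v₀ : ℕ, 0 < c₀ ∧ CycN E w x c₀ v₀ ∧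
      (∀ c v, 0 < c → CycN E w x c v → ((v₀ : ℝ) / c₀) * c ≤ v) := by
  classical
  obtain ⟨cb, vb, hcb0, hcbn, hcycb⟩ := cyc_exists (w := w) hout hn x
  set T : Finset (ℕ × ℕ) :=
    ((Finset.Icc 1 n) ×ˢ (Finset.range (n * W + 1))).filter
      (fun q => CycN E w x q.1 q.2) with hT
  have hmemT : ∀ c v, 0 < c → c ≤ n → CycN E w x c v → (c, v) ∈ T := by
    intro c v hc hcn hcyc
    have hvle : v ≤ c * W := by
      obtain ⟨f, hf, -, -, hv⟩ := hcyc
      exact hv ▸ wt_le hW hf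
    have : v < n * W + 1 := by
      have := Nat.mul_le_mul_right W hcn
      omega
    simp only [hT, Finset.mem_filter, Finset.mem_product, Finset.mem_Icc, Finset.mem_range]
    exact ⟨⟨⟨hc, hcn⟩, this⟩, hcyc⟩
  have hTne : T.Nonempty := ⟨(cb, vb), hmemT cb vb hcb0 hcbn hcycb⟩
  obtain ⟨q, hq, hmin⟩ := T.exists_min_image (fun q => (q.2 : ℝ) / q.1) hTne
  obtain ⟨c₀, v₀⟩ := q
  simp only [hT, Finset.mem_filter, Finset.mem_product, Finset.mem_Icc, Finset.mem_range] at hq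
  obtain ⟨⟨⟨hc₀1, hc₀n⟩, hv₀⟩, hcyc₀⟩ := hq
  refine ⟨c₀, v₀, hc₀1, hcyc₀, ?_⟩
  intro c
  induction c using Nat.strong_induction_on with
  | _ c IH =>
    intro v hc hcyc
    by_cases hcn : c ≤ n
    · have := hmin (c, v) (hmemT c v hc hcn hcyc)
      simpa using (le_div_iff₀ (by exact_mod_cast hc : (0:ℝ) < (c:ℝ))).mp this
    · obtain ⟨f, hf, hcycf, hreach, hv⟩ := hcyc
      obtain ⟨i, j, hij, hjn, heq⟩ := pigeonhole f hn
      have hjc : j ≤ c := by omega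
      set d := j - i with hd
      have hd0 : 0 < d := by omega
      set G : ℕ → Fin n := fun k => if k < i then f k else f (k + (j - i)) with hG
      obtain ⟨hg, hg0, hg1, hwt⟩ := splice (w := w) hij.le hjc heq hf
      have hseg := seg_cycle (w := w) hij hjc heq hf (prefix_reach (by omega) hf hreach)
      have h1 := IH d (by omega) _ hd0 hseg
      have hrem : CycN E w x (c - d) (wt w G (c - d)) :=
        ⟨G, hg, hg1.trans (hcycf.trans hg0.symm), by
          have hg0' : G 0 = f 0 := hg0
          rw [hg0']; exact hreach, rfl⟩
      have h2 := IH (c - d) (by omega) _ (by omega) hrem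
      have hcast : (v : ℝ) = (wt w G (c - d) : ℝ) + (∑ k ∈ Finset.Ico i j, w (f k) (f (k + 1)) : ℕ) := by
        rw [hv, ← hwt]; push_cast; ring
      have hcd : (c : ℝ) = (d : ℝ) + ((c - d : ℕ) : ℝ) := by
        have : d ≤ c := by omega
        push_cast [Nat.cast_sub this]
        ring
      rw [hcast, hcd]
      nlinarith [h1, h2]

lemma walk_lower {x : Fin n} {m₀ : ℝ} (hn : 0 < n) (hm0 : 0 ≤ m₀)
    (hlb : ∀ c v, 0 < c → CycN E w x c v → m₀ * c ≤ v) :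
    ∀ t (f : ℕ → Fin n), NW E f t → NR E x (f 0) → m₀ * t - m₀ * n ≤ wt w f t := by
  intro t
  induction t using Nat.strong_induction_on with
  | _ t IH =>
    intro f hf hreach
    by_cases htn : t ≤ n
    · have h1 : (0:ℝ) ≤ (wt w f t : ℝ) := by positivity
      have h2 : m₀ * t ≤ m₀ * n :=
        mul_le_mul_of_nonneg_left (by exact_mod_cast htn) hm0
      linarith
    · obtain ⟨i, j, hij, hjn, heq⟩ := pigeonhole f hn
      have hjt : j ≤ t := by omega
      set G : ℕ → Fin n := fun k => if k < i then f k else f (k + (j - i)) with hG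
      obtain ⟨hg, hg0, hg1, hwt⟩ := splice (w := w) hij.le hjt heq hf
      have hg0' : G 0 = f 0 := hg0
      have hseg := seg_cycle (w := w) hij hjt heq hf (prefix_reach (by omega) hf hreach)
      have h1 := hlb _ _ (by omega) hseg
      have h2 := IH (t - (j - i)) (by omega) G hg (by rw [hg0']; exact hreach)
      have hcast : (wt w f t : ℝ) = (wt w G (t - (j - i)) : ℝ)
          + ((∑ k ∈ Finset.Ico i j, w (f k) (f (k + 1)) : ℕ) : ℝ) := by
        rw [← hwt]; push_cast; ring
      have e1 : ((t - (j - i) : ℕ) : ℝ) = (t : ℝ) - ((j - i : ℕ) : ℝ) :=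
        Nat.cast_sub (by omega)
      rw [e1, mul_sub] at h2
      rw [hcast]
      linarith

lemma deltaNat_mem (hout : ∀ v : Fin n, ∃ u : Fin n, E v u) (x : Fin n) (t : ℕ) :
    ∃ f : ℕ → Fin n, NW E f t ∧ f 0 = x ∧ deltaNat E w t x = wt w f t := by
  have hne : {c : ℕ | ∃ f : ℕ → Fin n, NW E f t ∧ f 0 = x ∧ c = wt w f t}.Nonempty := by
    obtain ⟨f, hf0, hf⟩ := exists_walk (E := E) hout x
    exact ⟨wt w f t, f, hf t, hf0, rfl⟩
  have := Nat.sInf_mem (s := {c : ℕ | ∃ f : ℕ → Fin n, NW E f t ∧ f 0 = x ∧ c = wt w f t}) hne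
  obtain ⟨f, hf, h0, hv⟩ := this
  refine ⟨f, hf, h0, ?_⟩
  rw [deltaNat, deltaNat_set_eq]
  exact hv ▸ hv ▸ (by rw [← hv])

lemma deltaNat_le {x : Fin n} {t : ℕ} {f : ℕ → Fin n} (hf : NW E f t) (h0 : f 0 = x) :
    deltaNat E w t x ≤ wt w f t := by
  rw [deltaNat, deltaNat_set_eq]
  exact Nat.sInf_le ⟨f, hf, h0, rfl⟩

lemma simple_min_cycle {x : Fin n} {m₀ : ℝ} (hn : 0 < n)
    (hlb : ∀ c v, 0 < c → CycN E w x c v → m₀ * c ≤ v) :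
    ∀ c (f : ℕ → Fin n), 0 < c → NW E f c → f c = f 0 → NR E x (f 0) →
      (wt w f c : ℝ) = m₀ * c →
    ∃ (c' : ℕ) (f' : ℕ → Fin n), 0 < c' ∧ c' ≤ n ∧ NW E f' c' ∧ f' c' = f' 0 ∧ NR E x (f' 0) ∧
      (∀ a b, a < c' → b < c' → f' a = f' b → a = b) ∧ (wt w f' c' : ℝ) = m₀ * c' := by
  intro c
  induction c using Nat.strong_induction_on with
  | _ c IH =>
    intro f hc hf hcycf hreach hwtf
    by_cases hinj : ∀ a b, a < c → b < c → f a = f b → a = b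
    · refine ⟨c, f, hc, ?_, hf, hcycf, hreach, hinj, hwtf⟩
      have hcard : ((Finset.range c).image f).card = c := by
        rw [Finset.card_image_of_injOn, Finset.card_range]
        intro a ha b hb hab
        exact hinj a b (Finset.mem_range.mp ha) (Finset.mem_range.mp hb) hab
      calc c = ((Finset.range c).image f).card := hcard.symm
        _ ≤ (Finset.univ : Finset (Fin n)).card := Finset.card_le_univ _
        _ = n := by simp
    · push_neg at hinj
      obtain ⟨a, b, ha, hb, hab, hne⟩ := hinj
      -- wlog a < b
      obtain ⟨i, j, hij, hjc, heq⟩ : ∃ i j, i < j ∧ j < c ∧ f i = f j := by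
        rcases Nat.lt_or_ge a b with h | h
        · exact ⟨a, b, h, hb, hab⟩
        · exact ⟨b, a, by omega, ha, hab.symm⟩
      set d := j - i with hd
      have hd0 : 0 < d := by omega
      set G : ℕ → Fin n := fun k => if k < i then f k else f (k + (j - i)) with hG
      obtain ⟨hg, hg0, hg1, hwt⟩ := splice (w := w) hij.le (by omega) heq hf
      have hg0' : G 0 = f 0 := hg0
      have hseg := seg_cycle (w := w) hij (by omega) heq hf (prefix_reach (by omega) hf hreach)
      have h1 := hlb _ _ (by omega) hseg
      have hrem : CycN E w x (c - d) (wt w G (c - d)) :=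
        ⟨G, hg, hg1.trans (hcycf.trans hg0'.symm), by rw [hg0']; exact hreach, rfl⟩
      have h2 := hlb _ _ (by omega) hrem
      have hcd : ((c - d : ℕ) : ℝ) = (c : ℝ) - (d : ℝ) := Nat.cast_sub (by omega)
      have hwteq : (wt w G (c - d) : ℝ) = m₀ * ((c - d : ℕ) : ℝ) := by
        have hsum : (wt w G (c - d) : ℝ)
            + ((∑ k ∈ Finset.Ico i j, w (f k) (f (k + 1)) : ℕ) : ℝ) = m₀ * c := by
          rw [← hwtf, ← hwt]; push_cast; ring
        rw [hcd]
        have hle : (wt w G (c - d) : ℝ) ≤ m₀ * ((c : ℝ) - d) := by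
          have := h1
          nlinarith [h1, hsum]
        rw [hcd] at h2
        linarith
      exact IH (c - d) (by omega) G (by omega) hg
        (hg1.trans (hcycf.trans hg0'.symm)) (by rw [hg0']; exact hreach) hwteq

lemma trim {x : Fin n} {Cset : Finset (Fin n)} {cc : ℕ} (hcard : Cset.card = cc) :
    ∀ p (g : ℕ → Fin n), NW E g p → g 0 = x → (∀ k < p, g k ∉ Cset) → g p ∈ Cset →
    ∃ (p' : ℕ) (g' : ℕ → Fin n), p' + cc ≤ n ∧ NW E g' p' ∧ g' 0 = x ∧ g' p' = g p := by
  intro p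
  induction p using Nat.strong_induction_on with
  | _ p IH =>
    intro g hg h0 hint hend
    by_cases hinj : ∀ a b, a ≤ p → b ≤ p → g a = g b → a = b
    · refine ⟨p, g, ?_, hg, h0, rfl⟩
      have hdisj : Disjoint ((Finset.range p).image g) Cset := by
        rw [Finset.disjoint_left]
        rintro y hy hy2
        obtain ⟨k, hk, rfl⟩ := Finset.mem_image.mp hy
        exact hint k (Finset.mem_range.mp hk) hy2
      have hcardi : ((Finset.range p).image g).card = p := by
        rw [Finset.card_image_of_injOn, Finset.card_range]
        intro a ha b hb hab
        exact hinj a b (le_of_lt (Finset.mem_range.mp ha)) (le_of_lt (Finset.mem_range.mp hb)) hab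
      have hu := Finset.card_le_univ (((Finset.range p).image g) ∪ Cset)
      rw [Finset.card_union_of_disjoint hdisj, hcardi, hcard] at hu
      simpa using hu
    · push_neg at hinj
      obtain ⟨a, b, ha, hb, hab, hne⟩ := hinj
      obtain ⟨i, j, hij, hjp, heq⟩ : ∃ i j, i < j ∧ j ≤ p ∧ g i = g j := by
        rcases Nat.lt_or_ge a b with h | h
        · exact ⟨a, b, h, hb, hab⟩
        · exact ⟨b, a, by omega, ha, hab.symm⟩
      set d := j - i with hd
      have hd0 : 0 < d := by omega
      set G : ℕ → Fin n := fun k => if k < i then g k else g (k + (j - i)) with hG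
      obtain ⟨hg', hg0, hg1, -⟩ := splice (w := fun _ _ => 0) hij.le hjp heq hg
      have hg0' : G 0 = x := by rw [show G 0 = g 0 from hg0, h0]
      have hg1' : G (p - d) = g p := hg1
      refine (IH (p - d) (by omega) G hg' hg0' ?_ (by rw [hg1']; exact hend)).imp ?_
      · intro k hk
        by_cases h : k < i
        · simpa [hG, h] using hint k (by omega)
        · simpa [hG, h] using hint (k + (j - i)) (by omega)
      · intro p' hp'
        obtain ⟨g'', h1, h2, h3, h4⟩ := hp'
        exact ⟨g'', h1, h2, h3, by rw [h4, hg1']⟩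

lemma block_sum {c : ℕ} (term : ℕ → ℕ) (hc : 0 < c) :
    ∀ a, ∑ m ∈ Finset.Ico a (a + c), term (m % c) = ∑ r ∈ Finset.range c, term r := by
  intro a
  induction a with
  | zero =>
    rw [Finset.range_eq_Ico]
    simp only [Nat.zero_add]
    exact Finset.sum_congr rfl (fun m hm => by
      rw [Nat.mod_eq_of_lt (Finset.mem_Ico.mp hm).2])
  | succ a IH =>
    have e1 : ∑ m ∈ Finset.Ico a (a + c), term (m % c)
        = term (a % c) + ∑ m ∈ Finset.Ico (a + 1) (a + c), term (m % c) :=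
      Finset.sum_eq_sum_Ico_succ_bot (by omega) _
    have e2 : ∑ m ∈ Finset.Ico (a + 1) (a + 1 + c), term (m % c)
        = (∑ m ∈ Finset.Ico (a + 1) (a + c), term (m % c)) + term ((a + c) % c) := by
      rw [(by omega : a + 1 + c = (a + c) + 1), Finset.sum_Ico_succ_top (by omega)]
    rw [e2, Nat.add_mod_right]
    omega

lemma partial_sum {c : ℕ} (term : ℕ → ℕ) (hc : 0 < c) :
    ∀ q s r, r ≤ c → ∑ m ∈ Finset.Ico s (s + (q * c + r)), term (m % c)
      ≤ (q + 1) * (∑ r ∈ Finset.range c, term r) := by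
  intro q
  induction q with
  | zero =>
    intro s r hr
    simp only [Nat.zero_mul, Nat.zero_add, Nat.one_mul]
    calc ∑ m ∈ Finset.Ico s (s + r), term (m % c)
        ≤ ∑ m ∈ Finset.Ico s (s + c), term (m % c) :=
          Finset.sum_le_sum_of_subset (Finset.Ico_subset_Ico le_rfl (by omega))
      _ = ∑ r ∈ Finset.range c, term r := block_sum term hc s
  | succ q IH =>
    intro s r hr
    have e : s + ((q + 1) * c + r) = (s + c) + (q * c + r) := by ring
    rw [e, ← Finset.sum_Ico_consecutive (fun m => term (m % c))
      (by omega : s ≤ s + c) (by omega : s + c ≤ s + c + (q * c + r))]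
    have h1 := block_sum term hc s
    have h2 := IH (s + c) r hr
    calc (∑ m ∈ Finset.Ico s (s + c), term (m % c))
          + ∑ m ∈ Finset.Ico (s + c) (s + c + (q * c + r)), term (m % c)
        ≤ (∑ r ∈ Finset.range c, term r) + (q + 1) * (∑ r ∈ Finset.range c, term r) := by
          omega
      _ = (q + 1 + 1) * (∑ r ∈ Finset.range c, term r) := by ring

lemma delta_upper {x : Fin n} {W t : ℕ} (hW : ∀ a b : Fin n, E a b → w a b ≤ W)
    (hn : 0 < n) {m₀ : ℝ} (hm₀ : 0 ≤ m₀)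
    {c : ℕ} {f₀ : ℕ → Fin n} (hc0 : 0 < c) (hf₀ : NW E f₀ c)
    (hcyc : f₀ c = f₀ 0) (hreach : NR E x (f₀ 0))
    (hinj : ∀ a b, a < c → b < c → f₀ a = f₀ b → a = b)
    (hwt₀ : (wt w f₀ c : ℝ) = m₀ * c) (htn : n ≤ t) :
    (deltaNat E w t x : ℝ) ≤ m₀ * t + (n : ℝ) * W := by
  classical
  set Cset : Finset (Fin n) := (Finset.range c).image f₀ with hCset
  have hcard : Cset.card = c := by
    rw [hCset, Finset.card_image_of_injOn, Finset.card_range]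
    intro a ha b hb hab
    exact hinj a b (Finset.mem_range.mp ha) (Finset.mem_range.mp hb) hab
  obtain ⟨s₀, g₀, hg₀, hg₀0, hg₀1⟩ := hreach
  have hPex : ∃ i, g₀ i ∈ Cset := by
    refine ⟨s₀, ?_⟩
    rw [hg₀1, hCset]
    exact Finset.mem_image.mpr ⟨0, Finset.mem_range.mpr hc0, rfl⟩
  set i₀ := Nat.find hPex with hi₀
  have hi₀s : i₀ ≤ s₀ := Nat.find_min' hPex (by
    rw [hg₀1, hCset]; exact Finset.mem_image.mpr ⟨0, Finset.mem_range.mpr hc0, rfl⟩)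
  have hi₀mem : g₀ i₀ ∈ Cset := Nat.find_spec hPex
  have hi₀int : ∀ k < i₀, g₀ k ∉ Cset := fun k hk => Nat.find_min hPex hk
  obtain ⟨p, g, hpc, hgw, hg0, hgp⟩ := trim (E := E) hcard i₀ g₀
    (fun m hm => hg₀ m (by omega)) hg₀0 hi₀int hi₀mem
  have hgpC : g p ∈ Cset := by rw [hgp]; exact hi₀mem
  obtain ⟨s, hs, hfs⟩ := Finset.mem_image.mp hgpC
  rw [Finset.mem_range] at hs
  -- periodic extension
  set F : ℕ → Fin n := fun m => f₀ (m % c) with hF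
  have hFstep : ∀ m, F (m + 1) = f₀ (m % c + 1) := by
    intro m
    show f₀ ((m + 1) % c) = f₀ (m % c + 1)
    have hdm := Nat.div_add_mod m c
    rcases Nat.lt_or_ge (m % c + 1) c with h | h
    · have e : m + 1 = m % c + 1 + c * (m / c) := by omega
      rw [e, Nat.add_mul_mod_self_left, Nat.mod_eq_of_lt h]
    · have h1 : m % c + 1 = c := by have := Nat.mod_lt m hc0; omega
      have e : m + 1 = c * (m / c + 1) := by
        have : c * (m / c + 1) = c * (m / c) + c := by ring
        omega
      rw [e, Nat.mul_mod_right, h1, ← hcyc]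
  have hFe : ∀ m, E (F m) (F (m + 1)) := by
    intro m
    rw [hFstep m]
    exact hf₀ (m % c) (Nat.mod_lt m hc0)
  set term : ℕ → ℕ := fun r => w (f₀ r) (f₀ (r + 1)) with hterm
  have hFw : ∀ m, w (F m) (F (m + 1)) = term (m % c) := by
    intro m
    rw [hFstep m]
  have hpt : p ≤ t := by omega
  -- composite walk
  set G : ℕ → Fin n := fun m => if m < p then g m else F (m - p + s) with hG
  have hGpre : ∀ m ≤ p, G m = g m := by
    intro m hm
    rcases Nat.lt_or_ge m p with h | h
    · show (if m < p then g m else F (m - p + s)) = g m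
      rw [if_pos h]
    · have hmp : m = p := by omega
      show (if m < p then g m else F (m - p + s)) = g m
      rw [if_neg (by omega), hmp]
      show f₀ ((p - p + s) % c) = g p
      rw [(by omega : p - p + s = s), Nat.mod_eq_of_lt hs, hfs]
  have hGsuf : ∀ m, p ≤ m → G m = F (m - p + s) := by
    intro m hm
    rcases Nat.lt_or_ge m p with h | h
    · omega
    · simp [hG, Nat.not_lt.mpr h]
  have hGw : NW E G t := by
    intro m hm
    rcases Nat.lt_or_ge (m + 1) p with h | h
    · rw [hGpre m (by omega), hGpre (m + 1) (by omega)]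
      exact hgw m (by omega)
    · rcases Nat.lt_or_ge m p with h2 | h2
      · have hm1 : m + 1 = p := by omega
        rw [hGpre m (by omega), hGpre (m + 1) (by omega)]
        exact hgw m (by omega)
      · rw [hGsuf m h2, hGsuf (m + 1) (by omega), (by omega : m + 1 - p + s = (m - p + s) + 1)]
        exact hFe (m - p + s)
  have hG0 : G 0 = x := by rw [hGpre 0 (by omega), hg0]
  have hdle := deltaNat_le (w := w) hGw hG0
  -- weight computation
  have hsplit : wt w G t = wt w g p + ∑ m ∈ Finset.Ico p t, term ((m - p + s) % c) := by
    rw [wt, wt, Finset.range_eq_Ico,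
      ← Finset.sum_Ico_consecutive (fun m => w (G m) (G (m + 1))) (by omega : 0 ≤ p) hpt,
      ← Finset.range_eq_Ico]
    congr 1
    · exact Finset.sum_congr rfl (fun m hm => by
        have hm' := Finset.mem_range.mp hm
        rw [hGpre m (by omega), hGpre (m + 1) (by omega)])
    · exact Finset.sum_congr rfl (fun m hm => by
        have hm' := Finset.mem_Ico.mp hm
        rw [hGsuf m (by omega), hGsuf (m + 1) (by omega),
          (by omega : m + 1 - p + s = (m - p + s) + 1), hFw])
  have hshift : ∑ m ∈ Finset.Ico p t, term ((m - p + s) % c)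
      = ∑ m ∈ Finset.Ico s (s + (t - p)), term (m % c) := by
    rw [Finset.sum_Ico_eq_sum_range, Finset.sum_Ico_eq_sum_range]
    rw [(by omega : s + (t - p) - s = t - p)]
    exact Finset.sum_congr rfl (fun k _ => by rw [(by omega : p + k - p + s = s + k)])
  set q := (t - p) / c with hq
  have hqr : t - p = q * c + (t - p) % c := by
    have h := Nat.div_add_mod (t - p) c
    have h2 : c * ((t - p) / c) = ((t - p) / c) * c := Nat.mul_comm _ _
    rw [hq]
    omega
  have hsum_le : ∑ m ∈ Finset.Ico s (s + (t - p)), term (m % c)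
      ≤ (q + 1) * (∑ r ∈ Finset.range c, term r) := by
    rw [hqr]
    exact partial_sum term hc0 q s _ (le_of_lt (Nat.mod_lt _ hc0))
  have hterm_eq : ∑ r ∈ Finset.range c, term r = wt w f₀ c := rfl
  have hgle : wt w g p ≤ p * W := wt_le hW hgw
  -- combine in ℝ
  have hqc : (q : ℝ) * c ≤ (t : ℝ) - p := by
    have h1 : q * c ≤ t - p := by rw [hq]; exact Nat.div_mul_le_self _ _
    have h2 : ((t - p : ℕ) : ℝ) = (t : ℝ) - p := Nat.cast_sub hpt
    calc (q : ℝ) * c = ((q * c : ℕ) : ℝ) := by push_cast; ring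
      _ ≤ ((t - p : ℕ) : ℝ) := by exact_mod_cast h1
      _ = (t : ℝ) - p := h2
  have hm₀W : m₀ * c ≤ (c : ℝ) * W := by
    rw [← hwt₀]
    calc (wt w f₀ c : ℝ) ≤ ((c * W : ℕ) : ℝ) := by exact_mod_cast wt_le hW hf₀
      _ = (c : ℝ) * W := by push_cast; ring
  have hwtG : (wt w G t : ℝ) ≤ (p : ℝ) * W + ((q : ℝ) + 1) * (m₀ * c) := by
    rw [hsplit, Nat.cast_add]
    have h1 : (wt w g p : ℝ) ≤ (p : ℝ) * W := by exact_mod_cast hgle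
    have h2 : ((∑ m ∈ Finset.Ico p t, term ((m - p + s) % c) : ℕ) : ℝ)
        ≤ ((q : ℝ) + 1) * (m₀ * c) := by
      rw [← hwt₀]
      calc ((∑ m ∈ Finset.Ico p t, term ((m - p + s) % c) : ℕ) : ℝ)
          ≤ (((q + 1) * (∑ r ∈ Finset.range c, term r) : ℕ) : ℝ) := by
            exact_mod_cast hshift ▸ hsum_le
        _ = ((q : ℝ) + 1) * (wt w f₀ c : ℝ) := by rw [hterm_eq]; push_cast; ring
    linarith
  have hfinal : (p : ℝ) * W + ((q : ℝ) + 1) * (m₀ * c) ≤ m₀ * t + (n : ℝ) * W := by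
    have h1 : ((q : ℝ) + 1) * (m₀ * c) = m₀ * ((q : ℝ) * c) + m₀ * c := by ring
    have h2 : m₀ * ((q : ℝ) * c) ≤ m₀ * ((t : ℝ) - p) := mul_le_mul_of_nonneg_left hqc hm₀
    have h3 : (0 : ℝ) ≤ (p : ℝ) * m₀ := by positivity
    have h4 : (p : ℝ) * W + (c : ℝ) * W ≤ (n : ℝ) * W := by
      have : ((p + c : ℕ) : ℝ) ≤ (n : ℝ) := by exact_mod_cast hpc
      push_cast at this
      nlinarith [Nat.cast_nonneg (α := ℝ) W]
    nlinarith [hm₀W]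
  calc (deltaNat E w t x : ℝ) ≤ (wt w G t : ℝ) := by exact_mod_cast hdle
    _ ≤ _ := hwtG.trans hfinal

end MCMAux

/-- Let `0 < ε ≤ 1/2`, let `x` be a vertex with `μ(x) ≥ 1/n`, let `t` be
an integer with `t ≥ n²·W/ε`, and suppose `δ̂_t(x)` is a real number with
`δ_t(x) ≤ δ̂_t(x) ≤ (1+ε)·δ_t(x)`. Then `μ̂(x) := δ̂_t(x)/((1−ε)·t)` satisfies
`μ(x) ≤ μ̂(x) ≤ (1 + 7ε)·μ(x)`. -/
theorem approx_mcm_from_approx_delta {n : ℕ} (E : Fin n → Fin n → Prop)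
    (w : Fin n → Fin n → ℕ) (hout : ∀ v : Fin n, ∃ u : Fin n, E v u)
    (W : ℕ) (hW : ∀ a b : Fin n, E a b → w a b ≤ W)
    (x : Fin n) (hcyc : (cycleMeans E w x).Nonempty)
    (ε : ℝ) (hε0 : 0 < ε) (hε1 : ε ≤ 1 / 2)
    (hmu : 1 / (n : ℝ) ≤ mcm E w x)
    (t : ℕ) (ht : (n : ℝ) ^ 2 * (W : ℝ) / ε ≤ (t : ℝ))
    (deltaHat : ℝ) (h1 : (deltaNat E w t x : ℝ) ≤ deltaHat)
    (h2 : deltaHat ≤ (1 + ε) * (deltaNat E w t x : ℝ)) :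
    mcm E w x ≤ deltaHat / ((1 - ε) * (t : ℝ)) ∧
    deltaHat / ((1 - ε) * (t : ℝ)) ≤ (1 + 7 * ε) * mcm E w x := by
  open MCMAux in
  have hn : 0 < n := x.pos
  have hnR : (0:ℝ) < n := by exact_mod_cast hn
  have hnonneg : ∀ q ∈ cycleMeans E w x, (0:ℝ) ≤ q := by
    intro q hq
    obtain ⟨c, v, hc, -, rfl⟩ := MCMAux.mem_cycleMeans_iff.mp hq
    positivity
  have hbdd : BddBelow (cycleMeans E w x) := ⟨0, hnonneg⟩
  have hmupos : 0 < mcm E w x := lt_of_lt_of_le (by positivity) hmu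
  have hW1 : 1 ≤ W := by
    by_contra hW0
    have hW0' : W = 0 := by omega
    obtain ⟨q, hq⟩ := hcyc
    have hq0 : q ≤ 0 := by
      obtain ⟨c, v, hc, hcycN, rfl⟩ := MCMAux.mem_cycleMeans_iff.mp hq
      have hv0 : v = 0 := by
        obtain ⟨f, hf, -, -, hv⟩ := hcycN
        have h3 := MCMAux.wt_le (W := W) hW hf
        rw [hW0'] at h3
        omega
      rw [hv0]
      simp
    have := csInf_le hbdd hq
    have : mcm E w x ≤ 0 := le_trans this hq0
    linarith
  obtain ⟨c₀, v₀, hc₀, hcyc₀, hlb⟩ := MCMAux.min_cycle hW hout hn x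
  set m₀ : ℝ := (v₀ : ℝ) / c₀ with hm₀def
  have hc₀R : (0:ℝ) < c₀ := by exact_mod_cast hc₀
  have hmcm : mcm E w x = m₀ := by
    refine le_antisymm
      (csInf_le hbdd (MCMAux.mem_cycleMeans_iff.mpr ⟨c₀, v₀, hc₀, hcyc₀, rfl⟩)) ?_
    refine le_csInf hcyc ?_
    intro q hq
    obtain ⟨c, v, hc, hcycN, rfl⟩ := MCMAux.mem_cycleMeans_iff.mp hq
    have h := hlb c v hc hcycN
    rw [le_div_iff₀ (by exact_mod_cast hc : (0:ℝ) < (c:ℝ))]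
    exact h
  rw [hmcm] at hmu hmupos ⊢
  have hm₀0 : (0:ℝ) ≤ m₀ := hmupos.le
  have hm₀W : m₀ ≤ (W:ℝ) := by
    obtain ⟨f, hf, -, -, hv⟩ := hcyc₀
    have h' : (v₀ : ℝ) ≤ (c₀ : ℝ) * W := by
      have h'' := MCMAux.wt_le (W := W) hW hf
      rw [hv]
      calc (MCMAux.wt w f c₀ : ℝ) ≤ ((c₀ * W : ℕ) : ℝ) := by exact_mod_cast h''
        _ = (c₀ : ℝ) * W := by push_cast; ring
    rw [hm₀def, div_le_iff₀ hc₀R]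
    nlinarith
  have hεt : (n:ℝ)^2 * W ≤ ε * t := by
    rw [div_le_iff₀ hε0] at ht
    linarith
  have hWR : (1:ℝ) ≤ W := by exact_mod_cast hW1
  have hn1R : (1:ℝ) ≤ (n:ℝ) := by exact_mod_cast hn
  have htn : (n:ℝ) ≤ t := by
    nlinarith [mul_nonneg (by linarith : (0:ℝ) ≤ 1 - ε) (Nat.cast_nonneg (α := ℝ) t),
      mul_nonneg (by linarith : (0:ℝ) ≤ (n:ℝ) - 1) hnR.le,
      mul_nonneg (mul_nonneg hnR.le hnR.le) (by linarith : (0:ℝ) ≤ (W:ℝ) - 1)]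
  have htnN : n ≤ t := by exact_mod_cast htn
  have htR : (0:ℝ) < t := lt_of_lt_of_le hnR htn
  have h1nm : (1:ℝ) ≤ (n:ℝ) * m₀ := by
    have := (div_le_iff₀ hnR).mp hmu
    linarith
  have hnW : (n:ℝ) * W ≤ ε * t * m₀ := by
    have hA : (n:ℝ)^2 * W * m₀ ≤ ε * t * m₀ := mul_le_mul_of_nonneg_right hεt hm₀0
    have hB : (n:ℝ) * W * 1 ≤ (n:ℝ) * W * ((n:ℝ) * m₀) :=
      mul_le_mul_of_nonneg_left h1nm (by positivity)
    nlinarith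
  -- lower bound on delta
  obtain ⟨f, hf, hf0, hδ⟩ := MCMAux.deltaNat_mem (w := w) hout x t
  have hlow : m₀ * t - m₀ * n ≤ (deltaNat E w t x : ℝ) := by
    rw [hδ]
    exact MCMAux.walk_lower hn hm₀0 hlb t f hf (by rw [hf0]; exact MCMAux.NR.refl x)
  -- upper bound on delta
  obtain ⟨fc, hfcw, hfccyc, hfcreach, hfcv⟩ := hcyc₀
  have hfcwt : (MCMAux.wt w fc c₀ : ℝ) = m₀ * c₀ := by
    rw [← hfcv, hm₀def, div_mul_cancel₀]
    exact ne_of_gt hc₀R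
  obtain ⟨c', f', hc', hc'n, hf', hcyc', hreach', hinj', hwt'⟩ :=
    MCMAux.simple_min_cycle hn hlb c₀ fc hc₀ hfcw hfccyc hfcreach hfcwt
  have hup : (deltaNat E w t x : ℝ) ≤ m₀ * t + (n:ℝ) * W :=
    MCMAux.delta_upper hW hn hm₀0 hc' hf' hcyc' hreach' hinj' hwt' htnN
  -- final arithmetic
  have hpos : (0:ℝ) < (1 - ε) * t := mul_pos (by linarith) htR
  have hnm₀ : m₀ * n ≤ (n:ℝ) * W := by
    have := mul_le_mul_of_nonneg_right hm₀W hnR.le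
    linarith
  constructor
  · rw [le_div_iff₀ hpos]
    have hexp : m₀ * ((1 - ε) * (t:ℝ)) = m₀ * t - ε * t * m₀ := by ring
    rw [hexp]
    linarith [hlow, h1, hnW, hnm₀]
  · rw [div_le_iff₀ hpos]
    have hd1 : (deltaNat E w t x : ℝ) ≤ m₀ * t + ε * t * m₀ := by linarith
    have hd2 : deltaHat ≤ (1 + ε) * (m₀ * t + ε * t * m₀) :=
      h2.trans (mul_le_mul_of_nonneg_left hd1 (by linarith))
    have htm : (0:ℝ) ≤ (t:ℝ) * m₀ := by positivity
    have hkey : (0:ℝ) ≤ (ε * (4 - 8*ε)) * ((t:ℝ) * m₀) :=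
      mul_nonneg (mul_nonneg hε0.le (by linarith)) htm
    have hid : (1 + 7*ε) * m₀ * ((1 - ε) * (t:ℝ)) - (1 + ε) * (m₀ * t + ε * t * m₀)
        = (ε * (4 - 8*ε)) * ((t:ℝ) * m₀) := by ring
    linarith [hd2, hkey, hid]
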